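/- Under the same hypotheses (A defined by the quarter formula from metric-compatible Γ, explicit constant gammas and g), the spinor curvature satisfies the relation R(spinor)^p_{qij} = (1/4) Σ_{m,n,r,α} R^r_{mij} γ^α_{qn} g^{mn} γ^p_{αr}, where R^r_{mij} = ∂_i Γ^r_{jm} − ∂_j Γ^r_{im} + Σ_h (Γ^r_{ih} Γ^h_{jm} − Γ^r_{jh} Γ^h_{im}) and R(spinor)^p_{qij} = ∂_i A^p_{jq} − ∂_j A^p_{iq} + Σ_h (A^p_{ih} A^h_{jq} − A^p_{jh} A^h_{iq}). -/

import Mathlib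

open Matrix

/-- The chiral-representation Dirac gamma matrices `γ₀, γ₁, γ₂, γ₃`. -/
def gam : Fin 4 → Matrix (Fin 4) (Fin 4) ℂ :=
  ![!![0, 0, 1, 0; 0, 0, 0, 1; 1, 0, 0, 0; 0, 1, 0, 0],
    !![0, 0, 0, 1; 0, 0, 1, 0; 0, -1, 0, 0; -1, 0, 0, 0],
    !![0, 0, 0, -Complex.I; 0, 0, Complex.I, 0; 0, Complex.I, 0, 0; -Complex.I, 0, 0, 0],
    !![0, 0, 1, 0; 0, 0, 0, -1; -1, 0, 0, 0; 0, 1, 0, 0]]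

/-- The Minkowski metric components `g = diag(1, -1, -1, -1)` (equal to its own inverse). -/
def gmink : Fin 4 → Fin 4 → ℂ :=
  fun m n => if m = n then (if m = 0 then 1 else -1) else 0

/-- Hannibal's spinor connection components built from connection coefficients `Γ`
(`Γ i m r` is `Γ^r_{im}`): `A^a_{ib} = (1/4) Σ_{m,n,r,α} Γ^r_{im} γ^α_{bn} g^{mn} γ^a_{αr}`. -/
noncomputable def Acon (Γ : Fin 4 → Fin 4 → Fin 4 → ℝ) (a i b : Fin 4) : ℂ :=
  (4 : ℂ)⁻¹ * ∑ m : Fin 4, ∑ n : Fin 4, ∑ r : Fin 4, ∑ α : Fin 4,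
    (Γ i m r : ℂ) * gam n α b * gmink m n * gam r a α

/-- Partial derivative in the `i`-th coordinate direction of a real-valued function on `ℝ⁴`. -/
noncomputable def pdR (i : Fin 4) (f : (Fin 4 → ℝ) → ℝ) (x : Fin 4 → ℝ) : ℝ :=
  fderiv ℝ f x (Pi.single i 1)

/-- Partial derivative in the `i`-th coordinate direction of a complex-valued function on `ℝ⁴`. -/
noncomputable def pdC (i : Fin 4) (f : (Fin 4 → ℝ) → ℂ) (x : Fin 4 → ℝ) : ℂ :=
  fderiv ℝ f x (Pi.single i 1)

/-- The Riemann curvature `R^r_{mij} = ∂_i Γ^r_{jm} - ∂_j Γ^r_{im}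
+ Σ_h (Γ^r_{ih} Γ^h_{jm} - Γ^r_{jh} Γ^h_{im})` of connection coefficients
`Γ` (`Γ x i m r` is `Γ^r_{im}(x)`), in a holonomic frame. -/
noncomputable def Riem (Γ : (Fin 4 → ℝ) → Fin 4 → Fin 4 → Fin 4 → ℝ)
    (x : Fin 4 → ℝ) (r m i j : Fin 4) : ℝ :=
  pdR i (fun y => Γ y j m r) x - pdR j (fun y => Γ y i m r) x
    + ∑ h : Fin 4, (Γ x i h r * Γ x j m h - Γ x j h r * Γ x i m h)

private lemma metric_skew (Γ : (Fin 4 → ℝ) → Fin 4 → Fin 4 → Fin 4 → ℝ)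
    (hmetric : ∀ (x : Fin 4 → ℝ) (i m s : Fin 4),
      ∑ n : Fin 4, Γ x i n s * (if m = n then (if m = 0 then (1:ℝ) else -1) else 0)
        + ∑ n : Fin 4, Γ x i n m * (if n = s then (if n = 0 then (1:ℝ) else -1) else 0) = 0)
    (x : Fin 4 → ℝ) (i m s : Fin 4) :
    Γ x i m s * (if m = 0 then (1:ℝ) else -1)
      + Γ x i s m * (if s = 0 then (1:ℝ) else -1) = 0 := by
  have h := hmetric x i m s
  simp only [mul_ite, mul_zero, Finset.sum_ite_eq, Finset.sum_ite_eq',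
    Finset.mem_univ, if_true] at h
  simp only [mul_ite]
  simpa using h

private noncomputable def AF (B : Fin 4 → Fin 4 → ℝ) (p q : Fin 4) : ℂ :=
  (4 : ℂ)⁻¹ * ∑ m : Fin 4, ∑ n : Fin 4, ∑ r : Fin 4, ∑ α : Fin 4,
    (B m r : ℂ) * gam n α q * gmink m n * gam r p α

private lemma AF_00 (B : Fin 4 → Fin 4 → ℝ) : AF B 0 0 = (1/4:ℂ) * ((B 0 0 : ℝ) : ℂ) + (1/4:ℂ) * ((B 0 3 : ℝ) : ℂ) + (1/4:ℂ) * ((B 1 1 : ℝ) : ℂ) + ((-1/4:ℂ) * Complex.I) * ((B 1 2 : ℝ) : ℂ) + ((1/4:ℂ) * Complex.I) * ((B 2 1 : ℝ) : ℂ) + (1/4:ℂ) * ((B 2 2 : ℝ) : ℂ) + (1/4:ℂ) * ((B 3 0 : ℝ) : ℂ) + (1/4:ℂ) * ((B 3 3 : ℝ) : ℂ) := by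
  simp [AF, gam, gmink, Fin.sum_univ_four, Matrix.cons_val_zero, Matrix.cons_val_one,
    Matrix.head_cons, Matrix.cons_val_two, Matrix.cons_val_three, Matrix.vecHead, Matrix.vecTail] <;> ring_nf <;> simp only [Complex.I_sq] <;> ring_nf

private lemma AF_01 (B : Fin 4 → Fin 4 → ℝ) : AF B 0 1 = (1/4:ℂ) * ((B 0 1 : ℝ) : ℂ) + ((-1/4:ℂ) * Complex.I) * ((B 0 2 : ℝ) : ℂ) + (1/4:ℂ) * ((B 1 0 : ℝ) : ℂ) + (1/4:ℂ) * ((B 1 3 : ℝ) : ℂ) + ((-1/4:ℂ) * Complex.I) * ((B 2 0 : ℝ) : ℂ) + ((-1/4:ℂ) * Complex.I) * ((B 2 3 : ℝ) : ℂ) + (-1/4:ℂ) * ((B 3 1 : ℝ) : ℂ) + ((1/4:ℂ) * Complex.I) * ((B 3 2 : ℝ) : ℂ) := by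
  simp [AF, gam, gmink, Fin.sum_univ_four, Matrix.cons_val_zero, Matrix.cons_val_one,
    Matrix.head_cons, Matrix.cons_val_two, Matrix.cons_val_three, Matrix.vecHead, Matrix.vecTail] <;> ring_nf <;> simp only [Complex.I_sq] <;> ring_nf

private lemma AF_02 (B : Fin 4 → Fin 4 → ℝ) : AF B 0 2 = 0 := by
  simp [AF, gam, gmink, Fin.sum_univ_four, Matrix.cons_val_zero, Matrix.cons_val_one,
    Matrix.head_cons, Matrix.cons_val_two, Matrix.cons_val_three, Matrix.vecHead, Matrix.vecTail] <;> ring_nf <;> simp only [Complex.I_sq] <;> ring_nf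

private lemma AF_03 (B : Fin 4 → Fin 4 → ℝ) : AF B 0 3 = 0 := by
  simp [AF, gam, gmink, Fin.sum_univ_four, Matrix.cons_val_zero, Matrix.cons_val_one,
    Matrix.head_cons, Matrix.cons_val_two, Matrix.cons_val_three, Matrix.vecHead, Matrix.vecTail] <;> ring_nf <;> simp only [Complex.I_sq] <;> ring_nf

private lemma AF_10 (B : Fin 4 → Fin 4 → ℝ) : AF B 1 0 = (1/4:ℂ) * ((B 0 1 : ℝ) : ℂ) + ((1/4:ℂ) * Complex.I) * ((B 0 2 : ℝ) : ℂ) + (1/4:ℂ) * ((B 1 0 : ℝ) : ℂ) + (-1/4:ℂ) * ((B 1 3 : ℝ) : ℂ) + ((1/4:ℂ) * Complex.I) * ((B 2 0 : ℝ) : ℂ) + ((-1/4:ℂ) * Complex.I) * ((B 2 3 : ℝ) : ℂ) + (1/4:ℂ) * ((B 3 1 : ℝ) : ℂ) + ((1/4:ℂ) * Complex.I) * ((B 3 2 : ℝ) : ℂ) := by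
  simp [AF, gam, gmink, Fin.sum_univ_four, Matrix.cons_val_zero, Matrix.cons_val_one,
    Matrix.head_cons, Matrix.cons_val_two, Matrix.cons_val_three, Matrix.vecHead, Matrix.vecTail] <;> ring_nf <;> simp only [Complex.I_sq] <;> ring_nf

private lemma AF_11 (B : Fin 4 → Fin 4 → ℝ) : AF B 1 1 = (1/4:ℂ) * ((B 0 0 : ℝ) : ℂ) + (-1/4:ℂ) * ((B 0 3 : ℝ) : ℂ) + (1/4:ℂ) * ((B 1 1 : ℝ) : ℂ) + ((1/4:ℂ) * Complex.I) * ((B 1 2 : ℝ) : ℂ) + ((-1/4:ℂ) * Complex.I) * ((B 2 1 : ℝ) : ℂ) + (1/4:ℂ) * ((B 2 2 : ℝ) : ℂ) + (-1/4:ℂ) * ((B 3 0 : ℝ) : ℂ) + (1/4:ℂ) * ((B 3 3 : ℝ) : ℂ) := by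
  simp [AF, gam, gmink, Fin.sum_univ_four, Matrix.cons_val_zero, Matrix.cons_val_one,
    Matrix.head_cons, Matrix.cons_val_two, Matrix.cons_val_three, Matrix.vecHead, Matrix.vecTail] <;> ring_nf <;> simp only [Complex.I_sq] <;> ring_nf

private lemma AF_12 (B : Fin 4 → Fin 4 → ℝ) : AF B 1 2 = 0 := by
  simp [AF, gam, gmink, Fin.sum_univ_four, Matrix.cons_val_zero, Matrix.cons_val_one,
    Matrix.head_cons, Matrix.cons_val_two, Matrix.cons_val_three, Matrix.vecHead, Matrix.vecTail] <;> ring_nf <;> simp only [Complex.I_sq] <;> ring_nf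

private lemma AF_13 (B : Fin 4 → Fin 4 → ℝ) : AF B 1 3 = 0 := by
  simp [AF, gam, gmink, Fin.sum_univ_four, Matrix.cons_val_zero, Matrix.cons_val_one,
    Matrix.head_cons, Matrix.cons_val_two, Matrix.cons_val_three, Matrix.vecHead, Matrix.vecTail] <;> ring_nf <;> simp only [Complex.I_sq] <;> ring_nf

private lemma AF_20 (B : Fin 4 → Fin 4 → ℝ) : AF B 2 0 = 0 := by
  simp [AF, gam, gmink, Fin.sum_univ_four, Matrix.cons_val_zero, Matrix.cons_val_one,
    Matrix.head_cons, Matrix.cons_val_two, Matrix.cons_val_three, Matrix.vecHead, Matrix.vecTail] <;> ring_nf <;> simp only [Complex.I_sq] <;> ring_nf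

private lemma AF_21 (B : Fin 4 → Fin 4 → ℝ) : AF B 2 1 = 0 := by
  simp [AF, gam, gmink, Fin.sum_univ_four, Matrix.cons_val_zero, Matrix.cons_val_one,
    Matrix.head_cons, Matrix.cons_val_two, Matrix.cons_val_three, Matrix.vecHead, Matrix.vecTail] <;> ring_nf <;> simp only [Complex.I_sq] <;> ring_nf

private lemma AF_22 (B : Fin 4 → Fin 4 → ℝ) : AF B 2 2 = (1/4:ℂ) * ((B 0 0 : ℝ) : ℂ) + (-1/4:ℂ) * ((B 0 3 : ℝ) : ℂ) + (1/4:ℂ) * ((B 1 1 : ℝ) : ℂ) + ((-1/4:ℂ) * Complex.I) * ((B 1 2 : ℝ) : ℂ) + ((1/4:ℂ) * Complex.I) * ((B 2 1 : ℝ) : ℂ) + (1/4:ℂ) * ((B 2 2 : ℝ) : ℂ) + (-1/4:ℂ) * ((B 3 0 : ℝ) : ℂ) + (1/4:ℂ) * ((B 3 3 : ℝ) : ℂ) := by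
  simp [AF, gam, gmink, Fin.sum_univ_four, Matrix.cons_val_zero, Matrix.cons_val_one,
    Matrix.head_cons, Matrix.cons_val_two, Matrix.cons_val_three, Matrix.vecHead, Matrix.vecTail] <;> ring_nf <;> simp only [Complex.I_sq] <;> ring_nf

private lemma AF_23 (B : Fin 4 → Fin 4 → ℝ) : AF B 2 3 = (-1/4:ℂ) * ((B 0 1 : ℝ) : ℂ) + ((1/4:ℂ) * Complex.I) * ((B 0 2 : ℝ) : ℂ) + (-1/4:ℂ) * ((B 1 0 : ℝ) : ℂ) + (1/4:ℂ) * ((B 1 3 : ℝ) : ℂ) + ((1/4:ℂ) * Complex.I) * ((B 2 0 : ℝ) : ℂ) + ((-1/4:ℂ) * Complex.I) * ((B 2 3 : ℝ) : ℂ) + (-1/4:ℂ) * ((B 3 1 : ℝ) : ℂ) + ((1/4:ℂ) * Complex.I) * ((B 3 2 : ℝ) : ℂ) := by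
  simp [AF, gam, gmink, Fin.sum_univ_four, Matrix.cons_val_zero, Matrix.cons_val_one,
    Matrix.head_cons, Matrix.cons_val_two, Matrix.cons_val_three, Matrix.vecHead, Matrix.vecTail] <;> ring_nf <;> simp only [Complex.I_sq] <;> ring_nf

private lemma AF_30 (B : Fin 4 → Fin 4 → ℝ) : AF B 3 0 = 0 := by
  simp [AF, gam, gmink, Fin.sum_univ_four, Matrix.cons_val_zero, Matrix.cons_val_one,
    Matrix.head_cons, Matrix.cons_val_two, Matrix.cons_val_three, Matrix.vecHead, Matrix.vecTail] <;> ring_nf <;> simp only [Complex.I_sq] <;> ring_nf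

private lemma AF_31 (B : Fin 4 → Fin 4 → ℝ) : AF B 3 1 = 0 := by
  simp [AF, gam, gmink, Fin.sum_univ_four, Matrix.cons_val_zero, Matrix.cons_val_one,
    Matrix.head_cons, Matrix.cons_val_two, Matrix.cons_val_three, Matrix.vecHead, Matrix.vecTail] <;> ring_nf <;> simp only [Complex.I_sq] <;> ring_nf

private lemma AF_32 (B : Fin 4 → Fin 4 → ℝ) : AF B 3 2 = (-1/4:ℂ) * ((B 0 1 : ℝ) : ℂ) + ((-1/4:ℂ) * Complex.I) * ((B 0 2 : ℝ) : ℂ) + (-1/4:ℂ) * ((B 1 0 : ℝ) : ℂ) + (-1/4:ℂ) * ((B 1 3 : ℝ) : ℂ) + ((-1/4:ℂ) * Complex.I) * ((B 2 0 : ℝ) : ℂ) + ((-1/4:ℂ) * Complex.I) * ((B 2 3 : ℝ) : ℂ) + (1/4:ℂ) * ((B 3 1 : ℝ) : ℂ) + ((1/4:ℂ) * Complex.I) * ((B 3 2 : ℝ) : ℂ) := by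
  simp [AF, gam, gmink, Fin.sum_univ_four, Matrix.cons_val_zero, Matrix.cons_val_one,
    Matrix.head_cons, Matrix.cons_val_two, Matrix.cons_val_three, Matrix.vecHead, Matrix.vecTail] <;> ring_nf <;> simp only [Complex.I_sq] <;> ring_nf

private lemma AF_33 (B : Fin 4 → Fin 4 → ℝ) : AF B 3 3 = (1/4:ℂ) * ((B 0 0 : ℝ) : ℂ) + (1/4:ℂ) * ((B 0 3 : ℝ) : ℂ) + (1/4:ℂ) * ((B 1 1 : ℝ) : ℂ) + ((1/4:ℂ) * Complex.I) * ((B 1 2 : ℝ) : ℂ) + ((-1/4:ℂ) * Complex.I) * ((B 2 1 : ℝ) : ℂ) + (1/4:ℂ) * ((B 2 2 : ℝ) : ℂ) + (1/4:ℂ) * ((B 3 0 : ℝ) : ℂ) + (1/4:ℂ) * ((B 3 3 : ℝ) : ℂ) := by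
  simp [AF, gam, gmink, Fin.sum_univ_four, Matrix.cons_val_zero, Matrix.cons_val_one,
    Matrix.head_cons, Matrix.cons_val_two, Matrix.cons_val_three, Matrix.vecHead, Matrix.vecTail] <;> ring_nf <;> simp only [Complex.I_sq] <;> ring_nf

set_option maxHeartbeats 4000000 in
private lemma quad_part (Γ : Fin 4 → Fin 4 → Fin 4 → ℝ) (i j : Fin 4)
    (hmi : ∀ m s : Fin 4, Γ i m s * (if m = 0 then (1:ℝ) else -1)
        + Γ i s m * (if s = 0 then (1:ℝ) else -1) = 0)
    (hmj : ∀ m s : Fin 4, Γ j m s * (if m = 0 then (1:ℝ) else -1)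
        + Γ j s m * (if s = 0 then (1:ℝ) else -1) = 0) (p q : Fin 4) :
    ∑ h : Fin 4, (Acon Γ p i h * Acon Γ h j q - Acon Γ p j h * Acon Γ h i q)
    = (4:ℂ)⁻¹ * ∑ m : Fin 4, ∑ n : Fin 4, ∑ r : Fin 4, ∑ α : Fin 4,
      ((∑ h : Fin 4, (Γ i h r * Γ j m h - Γ j h r * Γ i m h) : ℝ) : ℂ)
        * gam n α q * gmink m n * gam r p α := by
  have i00 : Γ i 0 0 = 0 := by have := hmi 0 0; simp at this; linarith
  have i11 : Γ i 1 1 = 0 := by have := hmi 1 1; simp at this; linarith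
  have i22 : Γ i 2 2 = 0 := by have := hmi 2 2; simp at this; linarith
  have i33 : Γ i 3 3 = 0 := by have := hmi 3 3; simp at this; linarith
  have i10 : Γ i 1 0 = Γ i 0 1 := by have := hmi 0 1; simp at this; linarith
  have i20 : Γ i 2 0 = Γ i 0 2 := by have := hmi 0 2; simp at this; linarith
  have i30 : Γ i 3 0 = Γ i 0 3 := by have := hmi 0 3; simp at this; linarith
  have i21 : Γ i 2 1 = -Γ i 1 2 := by have := hmi 1 2; simp at this; linarith
  have i31 : Γ i 3 1 = -Γ i 1 3 := by have := hmi 1 3; simp at this; linarith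
  have i32 : Γ i 3 2 = -Γ i 2 3 := by have := hmi 2 3; simp at this; linarith
  have j00 : Γ j 0 0 = 0 := by have := hmj 0 0; simp at this; linarith
  have j11 : Γ j 1 1 = 0 := by have := hmj 1 1; simp at this; linarith
  have j22 : Γ j 2 2 = 0 := by have := hmj 2 2; simp at this; linarith
  have j33 : Γ j 3 3 = 0 := by have := hmj 3 3; simp at this; linarith
  have j10 : Γ j 1 0 = Γ j 0 1 := by have := hmj 0 1; simp at this; linarith
  have j20 : Γ j 2 0 = Γ j 0 2 := by have := hmj 0 2; simp at this; linarith
  have j30 : Γ j 3 0 = Γ j 0 3 := by have := hmj 0 3; simp at this; linarith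
  have j21 : Γ j 2 1 = -Γ j 1 2 := by have := hmj 1 2; simp at this; linarith
  have j31 : Γ j 3 1 = -Γ j 1 3 := by have := hmj 1 3; simp at this; linarith
  have j32 : Γ j 3 2 = -Γ j 2 3 := by have := hmj 2 3; simp at this; linarith
  show ∑ h : Fin 4, (AF (Γ i) p h * AF (Γ j) h q - AF (Γ j) p h * AF (Γ i) h q)
      = AF (fun m r => ∑ h : Fin 4, (Γ i h r * Γ j m h - Γ j h r * Γ i m h)) p q
  have hp4 : ∀ t : Fin 4, t = 0 ∨ t = 1 ∨ t = 2 ∨ t = 3 := by decide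
  rcases hp4 p with rfl|rfl|rfl|rfl <;> rcases hp4 q with rfl|rfl|rfl|rfl <;>
    (simp only [Fin.sum_univ_four, AF_00, AF_01, AF_02, AF_03, AF_10, AF_11, AF_12, AF_13, AF_20, AF_21, AF_22, AF_23, AF_30, AF_31, AF_32, AF_33, i00, i11, i22, i33, i10, i20, i30, i21, i31, i32, j00, j11, j22, j33, j10, j20, j30, j21, j31, j32]
     push_cast
     ring_nf
     try (simp only [Complex.I_sq]; ring_nf))

private lemma pdC_Acon (Γ : (Fin 4 → ℝ) → Fin 4 → Fin 4 → Fin 4 → ℝ)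
    (hdiff : ∀ i m r : Fin 4, Differentiable ℝ fun x => Γ x i m r)
    (i j p q : Fin 4) (x : Fin 4 → ℝ) :
    pdC i (fun y => Acon (Γ y) p j q) x
      = (4:ℂ)⁻¹ * ∑ m : Fin 4, ∑ n : Fin 4, ∑ r : Fin 4, ∑ α : Fin 4,
          ((pdR i (fun y => Γ y j m r) x : ℝ) : ℂ) * gam n α q * gmink m n * gam r p α := by
  have acrw : (fun y => Acon (Γ y) p j q)
      = fun y => (4:ℂ)⁻¹ * ∑ m : Fin 4, ∑ n : Fin 4, ∑ r : Fin 4, ∑ α : Fin 4,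
          (Γ y j m r) • (gam n α q * gmink m n * gam r p α) := by
    funext y
    simp only [Acon, Complex.real_smul, mul_assoc]
  have H : HasFDerivAt
      (fun y => (4:ℂ)⁻¹ * ∑ m : Fin 4, ∑ n : Fin 4, ∑ r : Fin 4, ∑ α : Fin 4,
        (Γ y j m r) • (gam n α q * gmink m n * gam r p α))
      ((4:ℂ)⁻¹ • ∑ m : Fin 4, ∑ n : Fin 4, ∑ r : Fin 4, ∑ α : Fin 4,
        (fderiv ℝ (fun y => Γ y j m r) x).smulRight
          (gam n α q * gmink m n * gam r p α)) x := by
    apply HasFDerivAt.const_mul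
    apply HasFDerivAt.fun_sum; intro m _
    apply HasFDerivAt.fun_sum; intro n _
    apply HasFDerivAt.fun_sum; intro r _
    apply HasFDerivAt.fun_sum; intro α _
    exact ((hdiff j m r) x).hasFDerivAt.smul_const _
  rw [show pdC i (fun y => Acon (Γ y) p j q) x
      = fderiv ℝ (fun y => Acon (Γ y) p j q) x (Pi.single i 1) from rfl, acrw, H.fderiv]
  simp only [ContinuousLinearMap.smul_apply, ContinuousLinearMap.sum_apply,
    ContinuousLinearMap.smulRight_apply, smul_eq_mul, Finset.smul_sum, Finset.mul_sum]
  refine Finset.sum_congr rfl fun m _ => Finset.sum_congr rfl fun n _ =>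
    Finset.sum_congr rfl fun r _ => Finset.sum_congr rfl fun α _ => ?_
  simp only [pdR, Complex.real_smul]
  ring


/-- For a metric-compatible connection `Γ` on `ℝ⁴` (holonomic frame) and the spinor
connection `A` given by the quarter-trace formula, the spinor curvature
`R(spinor)^p_{qij} = ∂_i A^p_{jq} - ∂_j A^p_{iq} + Σ_h (A^p_{ih} A^h_{jq} - A^p_{jh} A^h_{iq})`
is related to the Riemann curvature by
`R(spinor)^p_{qij} = (1/4) Σ_{m,n,r,α} R^r_{mij} γ^α_{qn} g^{mn} γ^p_{αr}`. -/
theorem spinor_curvature_eq_quarter_riemann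
    (Γ : (Fin 4 → ℝ) → Fin 4 → Fin 4 → Fin 4 → ℝ)
    (hdiff : ∀ i m r : Fin 4, Differentiable ℝ fun x => Γ x i m r)
    (hmetric : ∀ (x : Fin 4 → ℝ) (i m s : Fin 4),
      ∑ n : Fin 4, Γ x i n s * (if m = n then (if m = 0 then (1:ℝ) else -1) else 0)
        + ∑ n : Fin 4, Γ x i n m * (if n = s then (if n = 0 then (1:ℝ) else -1) else 0) = 0) :
    ∀ (x : Fin 4 → ℝ) (p q i j : Fin 4),
      pdC i (fun y => Acon (Γ y) p j q) x - pdC j (fun y => Acon (Γ y) p i q) x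
        + ∑ h : Fin 4, (Acon (Γ x) p i h * Acon (Γ x) h j q
            - Acon (Γ x) p j h * Acon (Γ x) h i q) =
      (4 : ℂ)⁻¹ * ∑ m : Fin 4, ∑ n : Fin 4, ∑ r : Fin 4, ∑ α : Fin 4,
        (Riem Γ x r m i j : ℂ) * gam n α q * gmink m n * gam r p α := by
  
  intro x p q i j
  have hm' := fun i m s => metric_skew Γ hmetric x i m s
  rw [pdC_Acon Γ hdiff i j p q x, pdC_Acon Γ hdiff j i p q x,
    quad_part (Γ x) i j (fun m s => hm' i m s) (fun m s => hm' j m s) p q]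
  simp only [Riem]
  push_cast
  simp only [add_mul, sub_mul, Finset.sum_add_distrib, Finset.sum_sub_distrib,
    mul_add, mul_sub]
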